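/- In general (without independence), T is monotone under adding a component: T_{d_1,…,d_{k+1}}(μ_{C̃}; ν_1,…,ν_{k+1}) ≥ T_{d_1,…,d_k}(μ_C; ν_1,…,ν_k), where μ_C is the marginal of μ_{C̃} on the first k blocks. -/

import Mathlib

open MeasureTheory
open scoped ENNReal unitInterval

/-- The optimal-transport cost between two measures `μ, ν` on `X` for the cost
function `c` : the infimum, over all couplings `γ` of `μ` and `ν`, of `∫ c dγ`.
For `c u v = ‖u - v‖²` this is the squared 2-Wasserstein distance `W₂²(μ, ν)`. -/
noncomputable def Wsq {X : Type*} [MeasurableSpace X] (c : X → X → ℝ)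
    (μ ν : Measure X) : ℝ≥0∞ :=
  ⨅ (γ : Measure (X × X)) (_ : γ.map Prod.fst = μ ∧ γ.map Prod.snd = ν),
    ∫⁻ p, ENNReal.ofReal (c p.1 p.2) ∂γ

/-- The `i`-th block `[0,1]^{d i}` of the cube `[0,1]^q`, `q = d 0 + ⋯ + d (k-1)`. -/
abbrev Blk {k : ℕ} (d : Fin k → ℕ) (i : Fin k) : Type := Fin (d i) → I

/-- The cube `[0,1]^q` decomposed in `k` blocks of dimensions `d i`. -/
abbrev Cube {k : ℕ} (d : Fin k → ℕ) : Type := ∀ i, Blk d i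

/-- Squared Euclidean cost `‖a - b‖²` on the block `[0,1]^{d i}`. -/
noncomputable def blockCost {k : ℕ} (d : Fin k → ℕ) (i : Fin k) (a b : Blk d i) : ℝ :=
  ∑ j, dist (a j) (b j) ^ 2

/-- Squared Euclidean cost `‖u - v‖²` on the cube `[0,1]^q`. -/
noncomputable def jointCost {k : ℕ} (d : Fin k → ℕ) (u v : Cube d) : ℝ :=
  ∑ i, ∑ j, dist (u i j) (v i j) ^ 2

/-- The marginal of a measure on the cube on the `i`-th coordinate block. -/
noncomputable def marg {k : ℕ} (d : Fin k → ℕ) (μ : Measure (Cube d)) (i : Fin k) :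
    Measure (Blk d i) :=
  μ.map (fun u => u i)

/-- `T_{d₁,…,d_k}(π; ν₁,…,ν_k) = W₂²(π, ν₁ × ⋯ × ν_k) − ∑ i W₂²(π_i, ν_i)`. -/
noncomputable def Tdep {k : ℕ} (d : Fin k → ℕ) (ν : ∀ i, Measure (Blk d i))
    (π : Measure (Cube d)) : ℝ :=
  (Wsq (jointCost d) π (Measure.pi ν)).toReal -
    ∑ i, (Wsq (blockCost d i) (marg d π i) (ν i)).toReal

/-- The marginal of a measure on a `(k+1)`-block cube on the first `k` blocks. -/
noncomputable def firstMarg {k : ℕ} (d : Fin (k + 1) → ℕ) (μ : Measure (Cube d)) :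
    Measure (Cube (fun i : Fin k => d i.castSucc)) :=
  μ.map (fun u => fun i : Fin k => u i.castSucc)

/-! ### Auxiliary lemmas -/

lemma dist_I_le_one (a b : I) : dist a b ≤ 1 := by
  rw [Subtype.dist_eq, Real.dist_eq]
  have h1 := a.2.1; have h2 := a.2.2; have h3 := b.2.1; have h4 := b.2.2
  exact abs_le.mpr ⟨by linarith, by linarith⟩

lemma jointCost_nonneg {k : ℕ} (d : Fin k → ℕ) (u v : Cube d) : 0 ≤ jointCost d u v :=
  Finset.sum_nonneg fun _ _ => Finset.sum_nonneg fun _ _ => sq_nonneg _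

lemma blockCost_nonneg {k : ℕ} (d : Fin k → ℕ) (i : Fin k) (a b : Blk d i) :
    0 ≤ blockCost d i a b :=
  Finset.sum_nonneg fun _ _ => sq_nonneg _

lemma jointCost_le {k : ℕ} (d : Fin k → ℕ) (u v : Cube d) :
    jointCost d u v ≤ ∑ i, (d i : ℝ) := by
  unfold jointCost
  refine Finset.sum_le_sum fun i _ => ?_
  calc ∑ j, dist (u i j) (v i j) ^ 2 ≤ ∑ _j : Fin (d i), (1 : ℝ) := by
        refine Finset.sum_le_sum fun j _ => ?_
        have h := dist_I_le_one (u i j) (v i j)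
        have h0 := dist_nonneg (x := u i j) (y := v i j)
        nlinarith
    _ = (d i : ℝ) := by simp

lemma measurable_jointCost {k : ℕ} (d : Fin k → ℕ) :
    Measurable (fun p : Cube d × Cube d => jointCost d p.1 p.2) := by
  unfold jointCost
  refine Finset.measurable_sum _ fun i _ => Finset.measurable_sum _ fun j _ => ?_
  exact (((measurable_pi_apply j).comp ((measurable_pi_apply i).comp measurable_fst)).dist
    ((measurable_pi_apply j).comp ((measurable_pi_apply i).comp measurable_snd))).pow_const 2

lemma measurable_blockCost {k : ℕ} (d : Fin k → ℕ) (i : Fin k) :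
    Measurable (fun p : Blk d i × Blk d i => blockCost d i p.1 p.2) := by
  unfold blockCost
  refine Finset.measurable_sum _ fun j _ => ?_
  exact (((measurable_pi_apply j).comp measurable_fst).dist
    ((measurable_pi_apply j).comp measurable_snd)).pow_const 2

lemma Wsq_le_bound {X : Type*} [MeasurableSpace X] (c : X → X → ℝ) (μ ν : Measure X)
    [IsProbabilityMeasure μ] [IsProbabilityMeasure ν] (B : ℝ≥0∞)
    (hc : ∀ u v, ENNReal.ofReal (c u v) ≤ B) : Wsq c μ ν ≤ B := by
  have hcoup : (μ.prod ν).map Prod.fst = μ ∧ (μ.prod ν).map Prod.snd = ν := by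
    constructor <;> simp
  refine le_trans (iInf₂_le (μ.prod ν) hcoup) ?_
  calc ∫⁻ p, ENNReal.ofReal (c p.1 p.2) ∂(μ.prod ν)
      ≤ ∫⁻ _, B ∂(μ.prod ν) := lintegral_mono fun p => hc _ _
    _ = B := by simp

lemma pi_map_eval {ι : Type*} [Fintype ι] {α : ι → Type*} [∀ i, MeasurableSpace (α i)]
    (ν : ∀ i, Measure (α i)) [∀ i, IsProbabilityMeasure (ν i)] (i0 : ι) :
    (Measure.pi ν).map (fun u => u i0) = ν i0 := by
  classical
  refine Measure.ext fun s hs => ?_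
  rw [Measure.map_apply (measurable_pi_apply i0) hs]
  rw [show (fun u : ∀ i, α i => u i0) ⁻¹' s = Function.eval i0 ⁻¹' s from rfl,
    Set.eval_preimage, Measure.pi_pi]
  refine (Finset.prod_eq_single i0 (fun b _ hb => ?_) (by simp)).trans ?_
  · simp [Function.update_of_ne hb]
  · simp

lemma pi_map_castSucc {k : ℕ} (d : Fin (k + 1) → ℕ) (ν : ∀ i, Measure (Blk d i))
    [∀ i, IsProbabilityMeasure (ν i)] :
    (Measure.pi ν).map (fun u (i : Fin k) => u i.castSucc) =
      Measure.pi (fun i : Fin k => ν i.castSucc) := by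
  have hP : Measurable (fun (u : Cube d) (i : Fin k) => u i.castSucc) :=
    measurable_pi_lambda _ fun i => measurable_pi_apply _
  refine (Measure.pi_eq fun s hs => ?_).symm
  rw [Measure.map_apply hP (MeasurableSet.univ_pi hs)]
  have hpre : (fun (u : Cube d) (i : Fin k) => u i.castSucc) ⁻¹' Set.pi Set.univ s =
      Set.pi Set.univ (Fin.lastCases Set.univ s) := by
    ext u
    simp only [Set.mem_preimage, Set.mem_univ_pi]
    constructor
    · intro h j
      induction j using Fin.lastCases with
      | last => simp
      | cast i => simpa using h i
    · intro h i
      simpa using h i.castSucc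
  rw [hpre, Measure.pi_pi, Fin.prod_univ_castSucc]
  simp [Fin.lastCases_castSucc, Fin.lastCases_last]

set_option maxHeartbeats 1000000 in
lemma Wsq_add_le_Wsq {k : ℕ} (d : Fin (k + 1) → ℕ)
    (μt : Measure (Cube d)) [IsProbabilityMeasure μt]
    (ν : ∀ i, Measure (Blk d i)) [∀ i, IsProbabilityMeasure (ν i)] :
    Wsq (jointCost (fun i : Fin k => d i.castSucc)) (firstMarg d μt)
        (Measure.pi (fun i : Fin k => ν i.castSucc)) +
      Wsq (blockCost d (Fin.last k)) (marg d μt (Fin.last k)) (ν (Fin.last k)) ≤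
      Wsq (jointCost d) μt (Measure.pi ν) := by
  refine le_iInf₂ fun γ hγ => ?_
  have hP : Measurable (fun (u : Cube d) (i : Fin k) => u i.castSucc) :=
    measurable_pi_lambda _ fun i => measurable_pi_apply _
  have hL : Measurable (fun u : Cube d => u (Fin.last k)) := measurable_pi_apply _
  have hmf : Measurable (fun p : Cube d × Cube d =>
      ENNReal.ofReal (jointCost (fun i : Fin k => d i.castSucc)
        (fun i => p.1 i.castSucc) (fun i => p.2 i.castSucc))) := by
    refine ENNReal.measurable_ofReal.comp ?_
    unfold jointCost
    refine Finset.measurable_sum _ fun i _ => Finset.measurable_sum _ fun j _ => ?_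
    exact (((measurable_pi_apply j).comp
        ((measurable_pi_apply i.castSucc).comp measurable_fst)).dist
      ((measurable_pi_apply j).comp
        ((measurable_pi_apply i.castSucc).comp measurable_snd))).pow_const 2
  have hml : Measurable (fun p : Cube d × Cube d =>
      ENNReal.ofReal (blockCost d (Fin.last k) (p.1 (Fin.last k)) (p.2 (Fin.last k)))) := by
    refine ENNReal.measurable_ofReal.comp ?_
    unfold blockCost
    refine Finset.measurable_sum _ fun j _ => ?_
    exact (((measurable_pi_apply j).comp
        ((measurable_pi_apply (Fin.last k)).comp measurable_fst)).dist
      ((measurable_pi_apply j).comp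
        ((measurable_pi_apply (Fin.last k)).comp measurable_snd))).pow_const 2
  have h1 : Wsq (jointCost (fun i : Fin k => d i.castSucc)) (firstMarg d μt)
      (Measure.pi (fun i : Fin k => ν i.castSucc)) ≤
      ∫⁻ p, ENNReal.ofReal (jointCost (fun i : Fin k => d i.castSucc)
        (fun i => p.1 i.castSucc) (fun i => p.2 i.castSucc)) ∂γ := by
    set P : Cube d → Cube (fun i : Fin k => d i.castSucc) :=
      fun u i => u i.castSucc with hPdef
    have hc1 : (γ.map (Prod.map P P)).map Prod.fst = firstMarg d μt := by
      rw [Measure.map_map measurable_fst (hP.prodMap hP),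
        show Prod.fst ∘ Prod.map P P = P ∘ Prod.fst from rfl,
        ← Measure.map_map hP measurable_fst, hγ.1]
      rfl
    have hc2 : (γ.map (Prod.map P P)).map Prod.snd =
        Measure.pi (fun i : Fin k => ν i.castSucc) := by
      rw [Measure.map_map measurable_snd (hP.prodMap hP),
        show Prod.snd ∘ Prod.map P P = P ∘ Prod.snd from rfl,
        ← Measure.map_map hP measurable_snd, hγ.2]
      exact pi_map_castSucc d ν
    have hJ : Measurable (fun p : Cube (fun i : Fin k => d i.castSucc) ×
        Cube (fun i : Fin k => d i.castSucc) =>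
        ENNReal.ofReal (jointCost (fun i : Fin k => d i.castSucc) p.1 p.2)) :=
      ENNReal.measurable_ofReal.comp (measurable_jointCost _)
    refine le_trans (iInf₂_le (γ.map (Prod.map P P)) ⟨hc1, hc2⟩) ?_
    rw [lintegral_map hJ (hP.prodMap hP)]
    exact le_of_eq (lintegral_congr fun a => rfl)
  have h2 : Wsq (blockCost d (Fin.last k)) (marg d μt (Fin.last k)) (ν (Fin.last k)) ≤
      ∫⁻ p, ENNReal.ofReal
        (blockCost d (Fin.last k) (p.1 (Fin.last k)) (p.2 (Fin.last k))) ∂γ := by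
    set L : Cube d → Blk d (Fin.last k) := fun u => u (Fin.last k) with hLdef
    have hc1 : (γ.map (Prod.map L L)).map Prod.fst = marg d μt (Fin.last k) := by
      rw [Measure.map_map measurable_fst (hL.prodMap hL),
        show Prod.fst ∘ Prod.map L L = L ∘ Prod.fst from rfl,
        ← Measure.map_map hL measurable_fst, hγ.1]
      rfl
    have hc2 : (γ.map (Prod.map L L)).map Prod.snd = ν (Fin.last k) := by
      rw [Measure.map_map measurable_snd (hL.prodMap hL),
        show Prod.snd ∘ Prod.map L L = L ∘ Prod.snd from rfl,
        ← Measure.map_map hL measurable_snd, hγ.2]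
      exact pi_map_eval ν (Fin.last k)
    have hB : Measurable (fun p : Blk d (Fin.last k) × Blk d (Fin.last k) =>
        ENNReal.ofReal (blockCost d (Fin.last k) p.1 p.2)) :=
      ENNReal.measurable_ofReal.comp (measurable_blockCost d (Fin.last k))
    refine le_trans (iInf₂_le (γ.map (Prod.map L L)) ⟨hc1, hc2⟩) ?_
    rw [lintegral_map hB (hL.prodMap hL)]
    exact le_of_eq (lintegral_congr fun a => rfl)
  have hsplit : ∀ p : Cube d × Cube d, ENNReal.ofReal (jointCost d p.1 p.2) =
      ENNReal.ofReal (jointCost (fun i : Fin k => d i.castSucc)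
        (fun i => p.1 i.castSucc) (fun i => p.2 i.castSucc)) +
      ENNReal.ofReal (blockCost d (Fin.last k) (p.1 (Fin.last k)) (p.2 (Fin.last k))) := by
    intro p
    rw [← ENNReal.ofReal_add (jointCost_nonneg _ _ _) (blockCost_nonneg _ _ _ _)]
    congr 1
    unfold jointCost blockCost
    rw [Fin.sum_univ_castSucc]
  calc Wsq (jointCost (fun i : Fin k => d i.castSucc)) (firstMarg d μt)
        (Measure.pi (fun i : Fin k => ν i.castSucc)) +
      Wsq (blockCost d (Fin.last k)) (marg d μt (Fin.last k)) (ν (Fin.last k))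
      ≤ (∫⁻ p, ENNReal.ofReal (jointCost (fun i : Fin k => d i.castSucc)
          (fun i => p.1 i.castSucc) (fun i => p.2 i.castSucc)) ∂γ) +
        ∫⁻ p, ENNReal.ofReal
          (blockCost d (Fin.last k) (p.1 (Fin.last k)) (p.2 (Fin.last k))) ∂γ :=
      add_le_add h1 h2
    _ = ∫⁻ p, ENNReal.ofReal (jointCost d p.1 p.2) ∂γ := by
      rw [← lintegral_add_left hmf]
      exact lintegral_congr fun p => (hsplit p).symm

/-- Monotonicity of `T` under adding a component:
`T_{d₁,…,d_{k+1}}(μ_C̃; ν₁,…,ν_{k+1}) ≥ T_{d₁,…,d_k}(μ_C; ν₁,…,ν_k)`,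
where `μ_C` is the marginal of `μ_C̃` on the first `k` blocks. -/
theorem Tdep_first_le_Tdep {k : ℕ} (d : Fin (k + 1) → ℕ)
    (μt : Measure (Cube d)) [IsProbabilityMeasure μt]
    (ν : ∀ i, Measure (Blk d i)) [∀ i, IsProbabilityMeasure (ν i)] :
    Tdep (fun i : Fin k => d i.castSucc) (fun i => ν i.castSucc) (firstMarg d μt) ≤
      Tdep d ν μt := by
  have hP : Measurable (fun (u : Cube d) (i : Fin k) => u i.castSucc) :=
    measurable_pi_lambda _ fun i => measurable_pi_apply _
  haveI : IsProbabilityMeasure (firstMarg d μt) :=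
    Measure.isProbabilityMeasure_map hP.aemeasurable
  haveI : ∀ i, IsProbabilityMeasure (marg d μt i) := fun i =>
    Measure.isProbabilityMeasure_map (measurable_pi_apply i).aemeasurable
  have hmarg : ∀ i : Fin k, marg (fun i : Fin k => d i.castSucc) (firstMarg d μt) i =
      marg d μt i.castSucc := by
    intro i
    unfold marg firstMarg
    rw [Measure.map_map (measurable_pi_apply i) hP]
    rfl
  have hkey := Wsq_add_le_Wsq d μt ν
  have hcB : Wsq (jointCost d) μt (Measure.pi ν) ≤ ENNReal.ofReal (∑ i, (d i : ℝ)) :=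
    Wsq_le_bound _ _ _ _ fun u v => ENNReal.ofReal_le_ofReal (jointCost_le d u v)
  have hc : Wsq (jointCost d) μt (Measure.pi ν) ≠ ⊤ :=
    (lt_of_le_of_lt hcB ENNReal.ofReal_lt_top).ne
  have ha : Wsq (jointCost (fun i : Fin k => d i.castSucc)) (firstMarg d μt)
      (Measure.pi (fun i : Fin k => ν i.castSucc)) ≠ ⊤ :=
    ((le_trans le_self_add hkey).trans_lt (lt_of_le_of_lt hcB ENNReal.ofReal_lt_top)).ne
  have hb : Wsq (blockCost d (Fin.last k)) (marg d μt (Fin.last k)) (ν (Fin.last k)) ≠ ⊤ :=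
    ((le_trans le_add_self hkey).trans_lt (lt_of_le_of_lt hcB ENNReal.ofReal_lt_top)).ne
  have htr : (Wsq (jointCost (fun i : Fin k => d i.castSucc)) (firstMarg d μt)
        (Measure.pi (fun i : Fin k => ν i.castSucc))).toReal +
      (Wsq (blockCost d (Fin.last k)) (marg d μt (Fin.last k)) (ν (Fin.last k))).toReal ≤
      (Wsq (jointCost d) μt (Measure.pi ν)).toReal := by
    rw [← ENNReal.toReal_add ha hb]
    exact ENNReal.toReal_mono hc hkey
  have hS : ∑ i : Fin k, (Wsq (blockCost (fun i : Fin k => d i.castSucc) i)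
        (marg (fun i : Fin k => d i.castSucc) (firstMarg d μt) i) (ν i.castSucc)).toReal =
      ∑ i : Fin k, (Wsq (blockCost d i.castSucc) (marg d μt i.castSucc) (ν i.castSucc)).toReal :=
    Finset.sum_congr rfl fun i _ => by rw [hmarg i]; rfl
  unfold Tdep
  rw [Fin.sum_univ_castSucc]
  simp only at hS ⊢
  linarith [htr, hS]
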